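/- In Pigou's example with total demand T = 1, the price of anarchy 1 / (1 - (β+1)^{-1/β} + (β+1)^{-1}) tends to infinity as β → ∞. -/

import Mathlib

open Filter Topology

theorem stmt_2 :
    Tendsto (fun β : ℝ => 1 / (1 - (β + 1) ^ (-1 / β) + (β + 1)⁻¹)) atTop atTop := by
  have hlog : Tendsto (fun β : ℝ => Real.log (β + 1) / β) atTop (𝓝 0) := by
    have h := (Real.tendsto_pow_log_div_mul_add_atTop 1 (-1) 1 one_ne_zero).comp
      (tendsto_atTop_add_const_right atTop 1 tendsto_id)
    refine h.congr' ?_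
    filter_upwards [eventually_gt_atTop (0 : ℝ)] with x hx
    simp [Function.comp]
  have hexp : Tendsto (fun β : ℝ => (β + 1) ^ (-1 / β)) atTop (𝓝 1) := by
    have h1 : Tendsto (fun β : ℝ => (-1 / β) * Real.log (β + 1)) atTop (𝓝 0) := by
      have := hlog.neg
      rw [neg_zero] at this
      refine this.congr' ?_
      filter_upwards [eventually_gt_atTop (0 : ℝ)] with x hx
      field_simp
    have := (Real.continuous_exp.tendsto 0).comp h1
    rw [Real.exp_zero] at this
    refine this.congr' ?_
    filter_upwards [eventually_gt_atTop (0 : ℝ)] with x hx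
    simp only [Function.comp]
    rw [← Real.exp_log (by linarith : (0:ℝ) < x + 1), ← Real.exp_mul, Real.exp_log (by linarith)]
    ring_nf
  have hinv : Tendsto (fun β : ℝ => (β + 1)⁻¹) atTop (𝓝 0) :=
    (tendsto_atTop_add_const_right atTop 1 tendsto_id).inv_tendsto_atTop
  have hd : Tendsto (fun β : ℝ => 1 - (β + 1) ^ (-1 / β) + (β + 1)⁻¹) atTop (𝓝[>] 0) := by
    rw [tendsto_nhdsWithin_iff]
    constructor
    · have := (((tendsto_const_nhds : Tendsto (fun _ : ℝ => (1:ℝ)) atTop (𝓝 1)).sub hexp).add hinv)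
      simpa using this
    · filter_upwards [eventually_gt_atTop (0 : ℝ)] with x hx
      have h1 : (x + 1 : ℝ) ^ (-1 / x) < 1 :=
        Real.rpow_lt_one_of_one_lt_of_neg (by linarith) (div_neg_of_neg_of_pos (by norm_num) hx)
      have h2 : (0:ℝ) < (x + 1)⁻¹ := by positivity
      simp only [Set.mem_Ioi]
      linarith
  simpa [one_div, Pi.inv_def] using hd.inv_tendsto_nhdsGT_zero
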